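/- For a graph G with vertex u of degree d and neighbors v_1, …, v_d, letting G_i = (G − u) − {v_1, …, v_{i−1}}, the ratio R(G, u) = Z(G − N_G[u])/Z(G − u) satisfies R(G, u) = ∏_{i=1}^{d} Z(G_i − v_i)/Z(G_i) = ∏_{i=1}^{d} (1 + R(G_i, v_i))^{−1}. -/

import Mathlib

open Finset

/-- The number of independent sets of `G` contained in the allowed vertex set `A`
(this equals `Z` of the induced subgraph of `G` on `A`). -/
def numIndep {W : Type*} [DecidableEq W] (G : SimpleGraph W) [DecidableRel G.Adj]
    (A : Finset W) : ℕ :=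
  (A.powerset.filter (fun s => ∀ a ∈ s, ∀ b ∈ s, ¬ G.Adj a b)).card

/-- The ratio `R(H, u) = Z(H − N_H[u]) / Z(H − u)` where `H` is the induced
subgraph of `G` on the allowed set `A`. -/
noncomputable def ratioR {W : Type*} [Fintype W] [DecidableEq W] (G : SimpleGraph W)
    [DecidableRel G.Adj] (A : Finset W) (u : W) : ℝ :=
  (numIndep G (A \ insert u (G.neighborFinset u)) : ℝ) / (numIndep G (A.erase u) : ℝ)

lemma numIndep_pos {W : Type*} [DecidableEq W] (G : SimpleGraph W) [DecidableRel G.Adj]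
    (A : Finset W) : 0 < numIndep G A :=
  Finset.card_pos.2 ⟨∅, by simp⟩

lemma numIndep_recur {W : Type*} [Fintype W] [DecidableEq W] (G : SimpleGraph W)
    [DecidableRel G.Adj]
    {A : Finset W} {v : W} (hv : v ∈ A) :
    numIndep G A = numIndep G (A.erase v) + numIndep G (A \ insert v (G.neighborFinset v)) := by
  unfold numIndep
  rw [← Finset.card_filter_add_card_filter_not (p := fun s : Finset W => v ∉ s)]
  congr 1
  · congr 1
    ext s
    simp only [Finset.mem_filter, Finset.mem_powerset, Finset.subset_erase]
    tauto
  · refine Finset.card_bij' (fun s _ => s.erase v) (fun t _ => insert v t)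
      ?_ ?_ ?_ ?_
    · intro s hs
      simp only [Finset.mem_filter, Finset.mem_powerset, not_not] at hs
      obtain ⟨⟨hsub, hind⟩, hvs⟩ := hs
      simp only [Finset.mem_filter, Finset.mem_powerset]
      constructor
      · intro a ha
        rw [Finset.mem_erase] at ha
        simp only [Finset.mem_sdiff, Finset.mem_insert, SimpleGraph.mem_neighborFinset]
        exact ⟨hsub ha.2, by push_neg; exact ⟨ha.1, fun h => hind v hvs a ha.2 h⟩⟩
      · intro a ha b hb
        exact hind a (Finset.mem_of_mem_erase ha) b (Finset.mem_of_mem_erase hb)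
    · intro t ht
      simp only [Finset.mem_filter, Finset.mem_powerset] at ht
      obtain ⟨hsub, hind⟩ := ht
      have hsub' : ∀ a ∈ t, a ∈ A ∧ a ≠ v ∧ ¬ G.Adj v a := by
        intro a ha
        have := hsub ha
        simp only [Finset.mem_sdiff, Finset.mem_insert, SimpleGraph.mem_neighborFinset] at this
        push_neg at this
        exact ⟨this.1, this.2.1, this.2.2⟩
      simp only [Finset.mem_filter, Finset.mem_powerset, not_not]
      refine ⟨⟨?_, ?_⟩, Finset.mem_insert_self v t⟩
      · intro a ha
        rcases Finset.mem_insert.1 ha with rfl | ha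
        · exact hv
        · exact (hsub' a ha).1
      · intro a ha b hb hadj
        rcases Finset.mem_insert.1 ha with h1 | h1 <;> rcases Finset.mem_insert.1 hb with h2 | h2
        · exact G.loopless.irrefl v (by rwa [h1, h2] at hadj)
        · exact (hsub' b h2).2.2 (by rwa [h1] at hadj)
        · exact (hsub' a h1).2.2 (by rw [h2] at hadj; exact hadj.symm)
        · exact hind a h1 b h2 hadj
    · intro s hs
      simp only [Finset.mem_filter, not_not] at hs
      exact Finset.insert_erase hs.2
    · intro t ht
      simp only [Finset.mem_filter, Finset.mem_powerset] at ht
      have : v ∉ t := by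
        intro h
        have := ht.1 h
        simp at this
      exact Finset.erase_insert this

lemma prod_div_telescope (f : ℕ → ℝ) (hf : ∀ i, f i ≠ 0) (n : ℕ) :
    ∏ i ∈ Finset.range n, f (i + 1) / f i = f n / f 0 := by
  induction n with
  | zero => simp [div_self (hf 0)]
  | succ n ih =>
      rw [Finset.prod_range_succ, ih, div_mul_div_comm, mul_comm (f n),
        mul_div_mul_right _ _ (hf n)]

/-- with `v_1, …, v_d` enumerating the neighbors of `u` and
`G_i = (G − u) − {v_1, …, v_{i−1}}`, we have
`R(G, u) = ∏_i Z(G_i − v_i)/Z(G_i) = ∏_i (1 + R(G_i, v_i))⁻¹`. -/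
theorem ratioR_eq_prod {W : Type*} [Fintype W] [DecidableEq W]
    (G : SimpleGraph W) [DecidableRel G.Adj] (u : W)
    (l : List W) (hnd : l.Nodup) (hl : l.toFinset = G.neighborFinset u) :
    ratioR G Finset.univ u =
      (∏ i : Fin l.length,
        (numIndep G (((Finset.univ.erase u) \ (l.take i).toFinset).erase (l.get i)) : ℝ) /
          (numIndep G ((Finset.univ.erase u) \ (l.take i).toFinset) : ℝ)) ∧
    ratioR G Finset.univ u =
      ∏ i : Fin l.length,
        (1 + ratioR G ((Finset.univ.erase u) \ (l.take i).toFinset) (l.get i))⁻¹ := by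
  set f : ℕ → ℝ := fun i => (numIndep G ((Finset.univ.erase u) \ (l.take i).toFinset) : ℝ)
    with hfdef
  have hf : ∀ i, f i ≠ 0 := fun i =>
    Nat.cast_ne_zero.2 (numIndep_pos G _).ne'
  have hmem : ∀ i : Fin l.length,
      l.get i ∈ (Finset.univ.erase u) \ (l.take i).toFinset := by
    intro i
    rw [Finset.mem_sdiff, Finset.mem_erase]
    refine ⟨⟨?_, Finset.mem_univ _⟩, ?_⟩
    · have hadj : l.get i ∈ G.neighborFinset u := by
        rw [← hl]; exact List.mem_toFinset.2 (l.get_mem i)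
      exact (G.ne_of_adj ((SimpleGraph.mem_neighborFinset G u _).1 hadj)).symm
    · intro hmem'
      rw [List.mem_toFinset] at hmem'
      obtain ⟨j, hj, hje⟩ := List.getElem_of_mem hmem'
      have hjl : (l.take ↑i).length ≤ ↑i := by simp
      have hji : j < (i : ℕ) := lt_of_lt_of_le hj hjl
      have hjlen : j < l.length := lt_of_lt_of_le hji (le_of_lt i.isLt)
      rw [List.getElem_take] at hje
      have := (List.Nodup.getElem_inj_iff hnd).1 (by simpa using hje)
      omega
  have hstep : ∀ i : Fin l.length,
      ((Finset.univ.erase u) \ (l.take ↑i).toFinset).erase (l.get i) =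
        (Finset.univ.erase u) \ (l.take (↑i + 1)).toFinset := by
    intro i
    have htake : l.take (↑i + 1) = l.take ↑i ++ [l.get i] := by
      rw [List.take_succ]
      simp [List.getElem?_eq_getElem i.isLt]
    ext a
    simp only [htake, Finset.mem_erase, Finset.mem_sdiff, List.toFinset_append,
      List.toFinset_cons, List.toFinset_nil, Finset.mem_union, Finset.mem_insert,
      Finset.notMem_empty, or_false, List.mem_toFinset, Finset.mem_singleton]
    tauto
  have hend : (Finset.univ.erase u) \ (l.take l.length).toFinset =
      Finset.univ \ insert u (G.neighborFinset u) := by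
    rw [List.take_length, hl]
    ext a
    simp only [Finset.mem_sdiff, Finset.mem_erase, Finset.mem_univ, Finset.mem_insert,
      true_and]
    tauto
  have hzero : (Finset.univ.erase u) \ (l.take 0).toFinset = Finset.univ.erase u := by simp
  have hratio : ratioR G Finset.univ u = f l.length / f 0 := by
    rw [hfdef]
    simp only [hend, hzero]
    rfl
  have hterm : ∀ i : Fin l.length,
      (numIndep G (((Finset.univ.erase u) \ (l.take ↑i).toFinset).erase (l.get i)) : ℝ) /
        (numIndep G ((Finset.univ.erase u) \ (l.take ↑i).toFinset) : ℝ) =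
      f (↑i + 1) / f ↑i := by
    intro i
    rw [hfdef]
    simp only [hstep i]
  have hprod : (∏ i : Fin l.length, f (↑i + 1) / f ↑i) = f l.length / f 0 := by
    rw [Fin.prod_univ_eq_prod_range (fun i => f (i + 1) / f i) l.length]
    exact prod_div_telescope f hf l.length
  have h1 : ratioR G Finset.univ u =
      ∏ i : Fin l.length,
        (numIndep G (((Finset.univ.erase u) \ (l.take i).toFinset).erase (l.get i)) : ℝ) /
          (numIndep G ((Finset.univ.erase u) \ (l.take i).toFinset) : ℝ) := by
    rw [hratio, ← hprod]
    exact (Finset.prod_congr rfl (fun i _ => hterm i)).symm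
  refine ⟨h1, ?_⟩
  rw [h1]
  apply Finset.prod_congr rfl
  intro i _
  rw [hterm i]
  have hrec := numIndep_recur G (hmem i)
  have her : (numIndep G (((Finset.univ.erase u) \ (l.take ↑i).toFinset).erase (l.get i)) : ℝ) ≠ 0 :=
    Nat.cast_ne_zero.2 (numIndep_pos G _).ne'
  have hfi1 : f ((i : ℕ) + 1) =
      (numIndep G (((Finset.univ.erase u) \ (l.take ↑i).toFinset).erase (l.get i)) : ℝ) := by
    simp only [hfdef, hstep i]
  have hcast : (f ↑i : ℝ) =
      (numIndep G (((Finset.univ.erase u) \ (l.take ↑i).toFinset).erase (l.get i)) : ℝ) +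
      (numIndep G (((Finset.univ.erase u) \ (l.take ↑i).toFinset) \
        insert (l.get i) (G.neighborFinset (l.get i))) : ℝ) := by
    simp only [hfdef]
    exact_mod_cast hrec
  rw [hfi1, hcast]
  simp only [ratioR]
  rw [one_add_div her, inv_div]
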